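/- Let π ⊆ ℝ^k be a rational linear subspace with lattice π_ℤ = π ∩ ℤ^k. If the volume of π ∩ [0,1]^k equals covol(π_ℤ), then π_ℤ has a ℤ-basis e₁, …, e_l consisting of vectors with entries in {0,1} such that no two basis vectors have a 1 in the same coordinate (i.e., the supports of the e_i are pairwise disjoint). -/

import Mathlib

open MeasureTheory
set_option maxHeartbeats 1000000 in

theorem stmt_10 (k : ℕ) (π : Submodule ℝ (EuclideanSpace ℝ (Fin k)))
    (hrat : ∃ s : Set (EuclideanSpace ℝ (Fin k)),
      (∀ v ∈ s, ∀ i, ∃ q : ℚ, v i = (q : ℝ)) ∧ Submodule.span ℝ s = π)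
    (L : Submodule ℤ π)
    (hL : ∀ x : π, x ∈ L ↔ ∀ i, ∃ m : ℤ, (x : EuclideanSpace ℝ (Fin k)) i = (m : ℝ))
    [DiscreteTopology L] [IsZLattice ℝ L]
    (hvol : volume {x : π | ∀ i, (x : EuclideanSpace ℝ (Fin k)) i ∈ Set.Icc (0 : ℝ) 1} =
      ENNReal.ofReal (ZLattice.covolume L)) :
    ∃ (l : ℕ) (b : Module.Basis (Fin l) ℤ L),
      (∀ (i : Fin l) (j : Fin k),
        ((b i : π) : EuclideanSpace ℝ (Fin k)) j = 0 ∨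
        ((b i : π) : EuclideanSpace ℝ (Fin k)) j = 1) ∧
      (∀ i i' : Fin l, i ≠ i' → ∀ j : Fin k,
        ((b i : π) : EuclideanSpace ℝ (Fin k)) j = 0 ∨
        ((b i' : π) : EuclideanSpace ℝ (Fin k)) j = 0) := by
  classical
  set d := Module.finrank ℝ π with hd
  -- the coordinate functionals on π
  let f : Fin k → (π →ₗ[ℝ] ℝ) := fun i =>
    { toFun := fun x => (x : EuclideanSpace ℝ (Fin k)) i
      map_add' := fun x y => rfl
      map_smul' := fun c x => rfl }
  have hker : (⨅ i, LinearMap.ker (f i)) = ⊥ := by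
    rw [Submodule.eq_bot_iff]
    intro x hx
    simp only [Submodule.mem_iInf, LinearMap.mem_ker] at hx
    ext i
    exact hx i
  have hspan : Submodule.span ℝ (Set.range f) = ⊤ := by
    rw [eq_top_iff]
    intro K _
    exact FiniteDimensional.mem_span_of_iInf_ker_le_ker (by rw [hker]; exact bot_le)
  -- extract a basis of the dual from the coordinate functionals
  obtain ⟨t, hts, htspan, htli⟩ := exists_linearIndependent ℝ (Set.range f)
  rw [hspan] at htspan
  have B : Module.Basis t ℝ (Module.Dual ℝ π) :=
    Module.Basis.mk htli (by rw [← htspan, Subtype.range_coe])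
  have : Fintype t := FiniteDimensional.fintypeBasisIndex B
  have hcard : Fintype.card t = d := by
    rw [← Module.finrank_eq_card_basis B, Subspace.dual_finrank_eq]
  let e : Fin d ≃ t := (Fintype.equivFinOfCardEq hcard).symm
  have hgex : ∀ j : Fin d, ∃ i : Fin k, f i = (e j : Module.Dual ℝ π) := fun j => hts (e j).2
  let g : Fin d → Fin k := fun j => (hgex j).choose
  have hg : ∀ j : Fin d, f (g j) = (e j : Module.Dual ℝ π) := fun j => (hgex j).choose_spec
  -- the projection to the coordinates in `g` is a linear bijection
  let φ₀ : π →ₗ[ℝ] (Fin d → ℝ) := LinearMap.pi (fun j => f (g j))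
  have hφ₀inj : Function.Injective φ₀ := by
    rw [← LinearMap.ker_eq_bot, Submodule.eq_bot_iff]
    intro x hx
    have hx' : ∀ j : Fin d, f (g j) x = 0 := by
      intro j
      have := congrFun (LinearMap.mem_ker.1 hx) j
      simpa [φ₀] using this
    have hall : ∀ K : Module.Dual ℝ π, K x = 0 := by
      intro K
      have hKmem : K ∈ Submodule.span ℝ t := by rw [htspan]; trivial
      induction hKmem using Submodule.span_induction with
      | mem y hy =>
          have := hx' (e.symm ⟨y, hy⟩)
          rwa [hg, Equiv.apply_symm_apply] at this
      | zero => simp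
      | add a b _ _ ha hb => simp [ha, hb]
      | smul c a _ ha => simp [ha]
    have : ∀ i : Fin k, (x : EuclideanSpace ℝ (Fin k)) i = 0 := fun i => hall (f i)
    ext i
    exact this i
  have hφ₀bij : Function.Bijective φ₀ :=
    ⟨hφ₀inj, (LinearMap.injective_iff_surjective_of_finrank_eq_finrank
      (by simp [hd])).1 hφ₀inj⟩
  let φ : π ≃ₗ[ℝ] (Fin d → ℝ) := LinearEquiv.ofBijective φ₀ hφ₀bij
  have hφapp : ∀ (x : π) (j : Fin d), φ x j = (x : EuclideanSpace ℝ (Fin k)) (g j) :=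
    fun x j => rfl
  -- a ℤ-basis of L indexed by Fin d
  have hrankL : Module.finrank ℤ L = d := ZLattice.rank ℝ L
  let b₀' := Module.Free.chooseBasis ℤ L
  have hcardI : Fintype.card (Module.Free.ChooseBasisIndex ℤ L) = d := by
    rw [← Module.finrank_eq_card_basis b₀', hrankL]
  let b₀ : Module.Basis (Fin d) ℤ L := b₀'.reindex (Fintype.equivFinOfCardEq hcardI)
  let bR : Module.Basis (Fin d) ℝ π := Module.Basis.ofZLatticeBasis ℝ L b₀
  have hbR : ∀ j, (bR j : π) = ((b₀ j : L) : π) := fun j => Module.Basis.ofZLatticeBasis_apply ℝ L b₀ j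
  -- the cube section
  set C : Set π := {x : π | ∀ i, (x : EuclideanSpace ℝ (Fin k)) i ∈ Set.Icc (0 : ℝ) 1} with hC
  set F : Set π := ZSpan.fundamentalDomain bR with hF
  have hcovol : ZLattice.covolume L volume = (volume F).toReal :=
    ZLattice.covolume_eq_measure_fundamentalDomain L volume
      (ZLattice.isAddFundamentalDomain b₀ volume)
  have hFfin : volume F < ⊤ := (ZSpan.fundamentalDomain_isBounded bR).measure_lt_top
  have hCF : volume C = volume F := by
    rw [hvol, hcovol, ENNReal.ofReal_toReal hFfin.ne]
  -- C is compact
  have hφcont : Continuous φ := φ.toLinearMap.continuous_of_finiteDimensional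
  have hCclosed : IsClosed C := by
    have : C = ⋂ i : Fin k, (f i) ⁻¹' (Set.Icc (0:ℝ) 1) := by
      ext x; simp [hC, Set.mem_iInter]; rfl
    rw [this]
    exact isClosed_iInter fun i =>
      IsClosed.preimage (f i).continuous_of_finiteDimensional isClosed_Icc
  have hCbdd : Bornology.IsBounded C := by
    rw [Metric.isBounded_iff_subset_closedBall 0]
    refine ⟨Real.sqrt k, fun x hx => ?_⟩
    simp only [Metric.mem_closedBall, dist_zero_right]
    have hnx : ‖x‖ = ‖(x : EuclideanSpace ℝ (Fin k))‖ := rfl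
    rw [hnx, EuclideanSpace.norm_eq]
    have hsum : (∑ i, ‖(x : EuclideanSpace ℝ (Fin k)) i‖ ^ 2) ≤ (k : ℝ) := by
      calc ∑ i, ‖(x : EuclideanSpace ℝ (Fin k)) i‖ ^ 2 ≤ ∑ _i : Fin k, (1:ℝ) := by
            refine Finset.sum_le_sum fun i _ => ?_
            have hxi := hx i
            have h1 : ‖(x : EuclideanSpace ℝ (Fin k)) i‖ ≤ 1 := by
              rw [Real.norm_eq_abs, abs_le]
              exact ⟨by linarith [hxi.1], hxi.2⟩
            nlinarith [norm_nonneg ((x : EuclideanSpace ℝ (Fin k)) i)]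
        _ = (k:ℝ) := by simp
    exact Real.sqrt_le_sqrt hsum
  have hCcompact : IsCompact C := Metric.isCompact_of_isClosed_isBounded hCclosed hCbdd
  -- transport measures through φ
  have hφmeas : Measurable (⇑φ) := hφcont.measurable
  set μ' : Measure (Fin d → ℝ) := Measure.map (⇑φ) volume with hμ'
  have : (Measure.map (φ : π ≃ₗ[ℝ] (Fin d → ℝ)) (volume : Measure π)).IsAddHaarMeasure :=
    Measure.MapLinearEquiv.isAddHaarMeasure _ φ
  have hμ'haar : μ'.IsAddHaarMeasure := this
  set C' : Set (Fin d → ℝ) := ⇑φ '' C with hC'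
  set F' : Set (Fin d → ℝ) := ZSpan.fundamentalDomain (bR.map φ) with hF'
  have hC'compact : IsCompact C' := hCcompact.image hφcont
  have hC'meas : MeasurableSet C' := hC'compact.isClosed.measurableSet
  have hF'meas : MeasurableSet F' := ZSpan.fundamentalDomain_measurableSet (bR.map φ)
  have hμ'C : μ' C' = volume C := by
    rw [hμ', Measure.map_apply hφmeas hC'meas, hC', Set.preimage_image_eq _ φ.injective]
  have hμ'F : μ' F' = volume F := by
    rw [hμ', Measure.map_apply hφmeas hF'meas, hF', ← ZSpan.map_fundamentalDomain bR φ,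
      Set.preimage_image_eq _ φ.injective]
  have hscal : μ' = μ'.addHaarScalarFactor volume • volume :=
    Measure.isAddLeftInvariant_eq_smul μ' volume
  have hcpos : (0 : NNReal) < μ'.addHaarScalarFactor volume :=
    Measure.addHaarScalarFactor_pos_of_isAddHaarMeasure μ' volume
  have hC'F' : volume C' = volume F' := by
    have h1 : μ' C' = μ' F' := by rw [hμ'C, hμ'F, hCF]
    rw [hscal] at h1
    simp only [Measure.smul_apply, smul_eq_mul] at h1
    have hne : ((μ'.addHaarScalarFactor volume : NNReal) : ENNReal) ≠ 0 := by
      exact_mod_cast hcpos.ne'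
    exact (ENNReal.mul_right_inj hne (by simp)).1 h1
  -- the matrix of the transported basis has integer entries
  have hint : ∀ (x : L) (i : Fin k), ∃ m : ℤ, ((x : π) : EuclideanSpace ℝ (Fin k)) i = (m : ℝ) :=
    fun x => (hL x.1).1 x.2
  let N : Matrix (Fin d) (Fin d) ℤ := fun i j => (hint (b₀ j) (g i)).choose
  have hN : ∀ i j, ((N i j : ℤ) : ℝ) = ((b₀ j : L) : π).1 (g i) :=
    fun i j => ((hint (b₀ j) (g i)).choose_spec).symm
  have hvmat : ∀ j i, (bR.map φ) j i = ((N i j : ℤ) : ℝ) := by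
    intro j i
    rw [hN]
    show φ (bR j) i = _
    rw [hφapp, hbR]
  have hmat : Matrix.of ⇑(bR.map φ) = ((N.map (Int.cast : ℤ → ℝ)).transpose) := by
    ext j i
    exact hvmat j i
  have hdetcast : ((N.det : ℤ) : ℝ) = (N.map (Int.cast : ℤ → ℝ)).det := by
    have := RingHom.map_det (Int.castRingHom ℝ) N
    simpa [RingHom.mapMatrix_apply] using this
  have hvolF' : volume F' = ENNReal.ofReal |((N.det : ℤ) : ℝ)| := by
    rw [hF', ZSpan.volume_fundamentalDomain, hmat, Matrix.det_transpose, hdetcast]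
  have hdetne : N.det ≠ 0 := by
    intro h0
    have : volume F' = 0 := by rw [hvolF', h0]; simp
    exact ZSpan.measure_fundamentalDomain_ne_zero (bR.map φ) this
  -- C' is contained in the unit cube
  set Q : Set (Fin d → ℝ) := Set.pi Set.univ (fun _ => Set.Icc (0:ℝ) 1) with hQ
  have hC'Q : C' ⊆ Q := by
    rintro _ ⟨x, hx, rfl⟩
    intro j _
    rw [hφapp]
    exact hx (g j)
  have hQvol : volume Q = 1 := by
    rw [hQ, volume_pi_pi]
    simp [Real.volume_Icc]
  have hC'le : volume C' ≤ 1 := hQvol ▸ measure_mono hC'Q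
  have hdet1 : |N.det| = 1 := by
    have h1 : (1 : ℤ) ≤ |N.det| := Int.one_le_abs (by exact hdetne)
    by_contra hne
    have h2 : (2 : ℤ) ≤ |N.det| := by omega
    have : (2 : ENNReal) ≤ volume F' := by
      rw [hvolF']
      have : ((2:ℤ):ℝ) ≤ |((N.det : ℤ) : ℝ)| := by
        rw [← Int.cast_abs]
        exact_mod_cast h2
      calc (2 : ENNReal) = ENNReal.ofReal ((2:ℤ):ℝ) := by norm_num
        _ ≤ ENNReal.ofReal |((N.det : ℤ) : ℝ)| := ENNReal.ofReal_le_ofReal this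
    rw [← hC'F'] at this
    have := this.trans hC'le
    norm_num at this
  have hvolC'1 : volume C' = 1 := by
    rw [hC'F', hvolF']
    have : |((N.det : ℤ) : ℝ)| = 1 := by rw [← Int.cast_abs, hdet1]; norm_num
    rw [this]; simp
  -- the cube is contained in C'
  have hQC' : Q ⊆ C' := by
    intro y hy
    by_contra hyC
    obtain ⟨ε, hε, hball⟩ : ∃ ε > 0, Metric.ball y ε ⊆ C'ᶜ :=
      Metric.mem_nhds_iff.1 (hC'compact.isClosed.isOpen_compl.mem_nhds hyC)
    set r : ℝ := min (ε/3) (1/3) with hr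
    have hr0 : 0 < r := lt_min (by linarith) (by norm_num)
    have hr1 : r ≤ 1/3 := min_le_right _ _
    have hrε : r ≤ ε/3 := min_le_left _ _
    set z : Fin d → ℝ := fun j => min (max (y j) r) (1-r) with hz
    have hy01 : ∀ j, y j ∈ Set.Icc (0:ℝ) 1 := fun j => hy j (Set.mem_univ j)
    have hzy : ∀ j, |z j - y j| ≤ r := by
      intro j
      have hyj := hy01 j
      have h1 : z j ≤ y j + r :=
        (min_le_left _ _).trans (max_le (by linarith [hyj.1]) (by linarith [hyj.1]))
      have h2 : y j - r ≤ z j :=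
        le_min ((by linarith : y j - r ≤ y j).trans (le_max_left _ _)) (by linarith [hyj.2])
      rw [abs_le]
      constructor <;> linarith
    have hzlb : ∀ j, r ≤ z j := fun j =>
      le_min (le_max_right _ _) (by linarith)
    have hzub : ∀ j, z j ≤ 1 - r := fun j => min_le_right _ _
    have hballQ : Metric.ball z (r/2) ⊆ Q := by
      intro w hw
      intro j _
      have hdj : dist (w j) (z j) ≤ dist w z := dist_le_pi_dist w z j
      have : |w j - z j| < r/2 := by
        rw [← Real.dist_eq]
        exact hdj.trans_lt (Metric.mem_ball.1 hw)
      rw [abs_lt] at this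
      have := hzlb j
      have := hzub j
      refine Set.mem_Icc.2 ⟨by linarith, by linarith⟩
    have hballε : Metric.ball z (r/2) ⊆ Metric.ball y ε := by
      intro w hw
      have h1 : dist w z < r/2 := Metric.mem_ball.1 hw
      have h2 : dist z y ≤ r := by
        rw [dist_pi_le_iff hr0.le]
        intro j
        rw [Real.dist_eq]
        exact hzy j
      have := dist_triangle w z y
      rw [Metric.mem_ball]
      linarith
    have hdisj : Disjoint C' (Metric.ball z (r/2)) := by
      rw [Set.disjoint_left]
      intro w hwC hwB
      exact hball (hballε hwB) hwC
    have hb0 : 0 < volume (Metric.ball z (r/2)) :=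
      Metric.measure_ball_pos volume z (by linarith)
    have hsum : volume C' + volume (Metric.ball z (r/2)) ≤ volume Q := by
      rw [← measure_union hdisj measurableSet_ball]
      exact measure_mono (Set.union_subset hC'Q hballQ)
    rw [hvolC'1, hQvol] at hsum
    have : volume (Metric.ball z (r/2)) ≤ 0 := by
      have h := (ENNReal.add_le_add_iff_left (by norm_num : (1:ENNReal) ≠ ⊤)).1
        (by simpa using hsum : (1:ENNReal) + volume (Metric.ball z (r/2)) ≤ 1 + 0)
      exact h
    exact absurd (le_antisymm this (zero_le)) hb0.ne'
  -- the coordinate map ψ : L → ℤ^d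
  let ψf : L → (Fin d → ℤ) := fun x j => (hint x (g j)).choose
  have hψf : ∀ (x : L) (j : Fin d), ((ψf x j : ℤ) : ℝ) = φ (x : π) j := by
    intro x j
    rw [hφapp]
    exact ((hint x (g j)).choose_spec).symm
  have hψadd : ∀ x y : L, ψf (x + y) = ψf x + ψf y := by
    intro x y
    funext j
    have hcast : ((ψf (x + y) j : ℤ) : ℝ) = ((ψf x j + ψf y j : ℤ) : ℝ) := by
      push_cast
      rw [hψf, hψf, hψf]
      have : ((x + y : L) : π) = (x : π) + (y : π) := rfl
      rw [this, map_add]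
      rfl
    exact_mod_cast hcast
  have hψsmul : ∀ (c : ℤ) (x : L), ψf (c • x) = c • ψf x := by
    intro c x
    funext j
    have hcast : ((ψf (c • x) j : ℤ) : ℝ) = ((c * ψf x j : ℤ) : ℝ) := by
      push_cast
      rw [hψf, hψf]
      have : ((c • x : L) : π) = c • (x : π) := rfl
      rw [this, map_zsmul]
      have : (c • φ (x : π)) j = c • (φ (x : π) j) := rfl
      rw [this, zsmul_eq_mul]
    exact_mod_cast hcast
  let ψ : L →ₗ[ℤ] (Fin d → ℤ) :=
    { toFun := ψf, map_add' := hψadd, map_smul' := hψsmul }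
  have hψ : ∀ (x : L) (j : Fin d), ((ψ x j : ℤ) : ℝ) = φ (x : π) j := hψf
  have hψinj : Function.Injective ψ := by
    intro x y hxy
    have : φ (x : π) = φ (y : π) := by
      funext j
      rw [← hψ, ← hψ]
      exact_mod_cast congrFun hxy j
    have := φ.injective this
    exact Subtype.ext this
  -- inverse matrix and surjectivity
  have hNunit : IsUnit N.det := by
    rcases abs_eq (by norm_num : (0:ℤ) ≤ 1) |>.1 hdet1 with h | h
    · exact Int.isUnit_iff.2 (Or.inl h)
    · exact Int.isUnit_iff.2 (Or.inr h)
  have : Invertible N := N.invertibleOfIsUnitDet hNunit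
  set M' : Matrix (Fin d) (Fin d) ℤ := ⅟N with hM'
  have hNM' : N * M' = 1 := mul_invOf_self N
  let xx : Fin d → L := fun j => ∑ c, M' c j • b₀ c
  have hφxx : ∀ j i, φ ((xx j : L) : π) i = (((1 : Matrix (Fin d) (Fin d) ℤ) i j : ℤ) : ℝ) := by
    intro j i
    have hcoe : ((xx j : L) : π) = ∑ c, (M' c j : ℤ) • ((b₀ c : L) : π) := by
      simp [xx]
    rw [hcoe, map_sum]
    have : ∀ c, φ ((M' c j : ℤ) • ((b₀ c : L) : π)) i
        = (M' c j : ℝ) * (N i c : ℝ) := by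
      intro c
      rw [map_zsmul]
      have h1 : ((M' c j : ℤ) • φ ((b₀ c : L) : π)) i = (M' c j : ℝ) * φ ((b₀ c : L) : π) i := by
        have : ((M' c j : ℤ) • φ ((b₀ c : L) : π)) i = (M' c j : ℤ) • (φ ((b₀ c : L) : π) i) := rfl
        rw [this, zsmul_eq_mul]
      rw [h1, hφapp, ← hN]
    rw [Finset.sum_apply]
    calc (∑ c, (φ ((M' c j : ℤ) • ((b₀ c : L) : π))) i)
        = ∑ c, (M' c j : ℝ) * (N i c : ℝ) := Finset.sum_congr rfl (fun c _ => this c)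
      _ = (((N * M') i j : ℤ) : ℝ) := by
          rw [Matrix.mul_apply]
          push_cast
          exact Finset.sum_congr rfl (fun c _ => mul_comm _ _)
      _ = _ := by rw [hNM']
  have hψxx : ∀ j, ψ (xx j) = fun i => (1 : Matrix (Fin d) (Fin d) ℤ) i j := by
    intro j
    funext i
    have : ((ψ (xx j) i : ℤ) : ℝ) = (((1 : Matrix (Fin d) (Fin d) ℤ) i j : ℤ) : ℝ) := by
      rw [hψ, hφxx]
    exact_mod_cast this
  have hψsurj : Function.Surjective ψ := by
    intro y
    refine ⟨∑ j, y j • xx j, ?_⟩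
    rw [map_sum]
    funext i
    rw [Finset.sum_apply]
    have : ∀ j, (y j • ψ (xx j)) i = y j * (1 : Matrix (Fin d) (Fin d) ℤ) i j := by
      intro j
      have h' : (y j • ψ (xx j)) i = y j • (ψ (xx j) i) := rfl
      rw [h', hψxx]
      exact smul_eq_mul ..
    calc (∑ j, (ψ (y j • xx j)) i) = ∑ j, y j * (1 : Matrix (Fin d) (Fin d) ℤ) i j :=
          Finset.sum_congr rfl (fun j _ => by rw [map_zsmul]; exact this j)
      _ = y i := by
          simp [Matrix.one_apply]
  -- the basis of L adapted to the coordinates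
  let ψe : L ≃ₗ[ℤ] (Fin d → ℤ) := LinearEquiv.ofBijective ψ ⟨hψinj, hψsurj⟩
  let b : Module.Basis (Fin d) ℤ L := (Pi.basisFun ℤ (Fin d)).map ψe.symm
  have hψb : ∀ j, ψ (b j) = Pi.single j 1 := by
    intro j
    have h1 : b j = ψe.symm (Pi.single j 1) := by
      simp [b, Module.Basis.map_apply, Pi.basisFun_apply]
    have h2 : ψ (ψe.symm (Pi.single j 1)) = ψe (ψe.symm (Pi.single j 1)) := rfl
    rw [h1, h2, LinearEquiv.apply_symm_apply]
  have hφb : ∀ (j : Fin d) (i : Fin d),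
      φ ((b j : L) : π) i = (((Pi.single j 1 : Fin d → ℤ) i : ℤ) : ℝ) := by
    intro j i
    rw [← hψ, hψb]
  -- each b j lies in the cube section C
  have hbC : ∀ j : Fin d, ((b j : L) : π) ∈ C := by
    intro j
    have hmem : (fun i => (((Pi.single j 1 : Fin d → ℤ) i : ℤ) : ℝ)) ∈ Q := by
      intro i _
      by_cases h : i = j
      · subst h; simp
      · simp [Pi.single_eq_of_ne h]
    obtain ⟨x', hx'C, hx'⟩ := hQC' hmem
    have : x' = ((b j : L) : π) := by
      apply φ.injective
      rw [hx']
      funext i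
      rw [hφb]
    rwa [this] at hx'C
  -- sums of two distinct basis vectors lie in C as well
  have hbC2 : ∀ j j' : Fin d, j ≠ j' → ((b j : L) : π) + ((b j' : L) : π) ∈ C := by
    intro j j' hjj'
    have hmem : (fun i => (((Pi.single j 1 + Pi.single j' 1 : Fin d → ℤ) i : ℤ) : ℝ)) ∈ Q := by
      intro i _
      have hcases : ((Pi.single j (1:ℤ) + Pi.single j' 1 : Fin d → ℤ)) i = 0 ∨
          ((Pi.single j (1:ℤ) + Pi.single j' 1 : Fin d → ℤ)) i = 1 := by
        simp only [Pi.add_apply]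
        by_cases h : i = j
        · subst h
          rw [Pi.single_eq_same, Pi.single_eq_of_ne (by exact fun hc => hjj' (hc ▸ rfl))]
          norm_num
        · by_cases h' : i = j'
          · subst h'
            rw [Pi.single_eq_same, Pi.single_eq_of_ne h]
            norm_num
          · rw [Pi.single_eq_of_ne h, Pi.single_eq_of_ne h']
            norm_num
      show (((Pi.single j 1 + Pi.single j' 1 : Fin d → ℤ)) i : ℝ) ∈ Set.Icc (0:ℝ) 1
      rcases hcases with h | h <;> rw [h] <;> norm_num
    obtain ⟨x', hx'C, hx'⟩ := hQC' hmem
    have : x' = ((b j : L) : π) + ((b j' : L) : π) := by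
      apply φ.injective
      rw [hx']
      funext i
      rw [map_add]
      have : (φ ((b j : L) : π) + φ ((b j' : L) : π)) i
          = φ ((b j : L) : π) i + φ ((b j' : L) : π) i := rfl
      rw [this, hφb, hφb]
      simp only [Pi.add_apply, Int.cast_add]
    rwa [this] at hx'C
  -- coordinates of basis vectors are 0 or 1
  have hval : ∀ (j : Fin d) (i : Fin k),
      ((b j : L) : π).1 i = 0 ∨ ((b j : L) : π).1 i = 1 := by
    intro j i
    obtain ⟨m, hm⟩ := hint (b j) i
    have h01 : (0:ℝ) ≤ (m:ℝ) ∧ (m:ℝ) ≤ 1 := by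
      have := hbC j i
      rw [hm] at this
      exact ⟨this.1, this.2⟩
    obtain ⟨hm0a, hm0b⟩ : (0:ℤ) ≤ m ∧ m ≤ 1 := by exact_mod_cast h01
    interval_cases m
    · left; rw [hm]; norm_num
    · right; rw [hm]; norm_num
  refine ⟨d, b, fun j i => hval j i, ?_⟩
  intro j j' hjj' i
  rcases hval j i with h0 | h1
  · exact Or.inl h0
  rcases hval j' i with h0' | h1'
  · exact Or.inr h0'
  exfalso
  have hsumC := hbC2 j j' hjj'
  have := (hsumC i).2
  have hadd : ((((b j : L) : π) + ((b j' : L) : π) : π) : EuclideanSpace ℝ (Fin k)) i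
      = ((b j : L) : π).1 i + ((b j' : L) : π).1 i := rfl
  rw [hadd, h1, h1'] at this
  norm_num at this
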